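/- Let C be a category with binary coproducts, p₁, p₂ plain rules, and tp : H₁ ⇐_(p₁,m₁) G ⇒_(p₂,m₂) H₂ a parallel independent pair of AC-disregarding transformations with witnesses d₁₂ : L₁ → D₂ (k₂ ∘ d₁₂ = m₁) and d₂₁ : L₂ → D₁ (k₁ ∘ d₂₁ = m₂). Then the coproduct mediating morphism m = [m₁, m₂] : L₁+L₂ → G embeds the transformation pair tp_(L₁+L₂) into tp via extension diagrams; concretely, the induced vertical morphisms [f₁, d₂₁] : I₁+L₂ → D₁ and [m₁*, c₁ ∘ d₂₁] : R₁+L₂ → H₁ (and symmetrically [d₁₂, f₂] : L₁+I₂ → D₂ and [c₂ ∘ d₁₂, m₂*] : L₁+R₂ → H₂) make all the required squares pushouts. -/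

import Mathlib

open CategoryTheory CategoryTheory.Limits

universe v u

variable {C : Type u} [Category.{v} C]

attribute [local simp] coprod.inl_desc coprod.inr_desc coprod.inl_desc_assoc coprod.inr_desc_assoc

/-- A plain rule: a span `L ⟵l I ⟶r R` with `l` and `r` monomorphisms. -/
structure PlainRule (C : Type u) [Category.{v} C] : Type (max u v) where
  L : C
  I : C
  R : C
  l : I ⟶ L
  r : I ⟶ R
  mono_l : Mono l
  mono_r : Mono r

/-- An AC-disregarding direct transformation `G ⇒_(p,m) H`: a double pushout with
context `D`, match `m` and comatch `cm`. -/
structure Trafo (p : PlainRule C) (G H : C) : Type (max u v) where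
  m : p.L ⟶ G
  D : C
  f : p.I ⟶ D
  k : D ⟶ G
  c : D ⟶ H
  cm : p.R ⟶ H
  po1 : IsPushout p.l f m k
  po2 : IsPushout p.r f cm c

/-- A pair of AC-disregarding transformations `H₁ ⇐_(p₁,m₁) G ⇒_(p₂,m₂) H₂`. -/
structure TrafoPair (p₁ p₂ : PlainRule C) : Type (max u v) where
  H₁ : C
  G : C
  H₂ : C
  t₁ : Trafo p₁ G H₁
  t₂ : Trafo p₂ G H₂

/-- An extension diagram embedding `t'` into `t` via extension morphism `ext`. -/
structure TrafoEmbedding {p : PlainRule C} {G' H' G H : C}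
    (t' : Trafo p G' H') (t : Trafo p G H) (ext : G' ⟶ G) : Type (max u v) where
  d : t'.D ⟶ t.D
  h : H' ⟶ H
  match_eq : t'.m ≫ ext = t.m
  f_eq : t'.f ≫ d = t.f
  po1 : IsPushout t'.k d ext t.k
  po2 : IsPushout t'.c d h t.c

/-- A transformation pair embedded into another via a common extension morphism. -/
structure PairEmbedding {p₁ p₂ : PlainRule C} (tp' tp : TrafoPair p₁ p₂)
    (ext : tp'.G ⟶ tp.G) : Type (max u v) where
  e₁ : TrafoEmbedding tp'.t₁ tp.t₁ ext
  e₂ : TrafoEmbedding tp'.t₂ tp.t₂ ext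

/-- Parallel independence of a plain transformation pair. -/
def TrafoPair.ParallelIndep {p₁ p₂ : PlainRule C} (tp : TrafoPair p₁ p₂) : Prop :=
  (∃ d₁₂ : p₁.L ⟶ tp.t₂.D, d₁₂ ≫ tp.t₂.k = tp.t₁.m) ∧
  (∃ d₂₁ : p₂.L ⟶ tp.t₁.D, d₂₁ ≫ tp.t₁.k = tp.t₂.m)

/-- Use-delete conflict: no commuting morphism `d₁₂ : L₁ ⟶ D₂` exists. -/
def TrafoPair.UseDelete {p₁ p₂ : PlainRule C} (tp : TrafoPair p₁ p₂) : Prop :=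
  ¬ ∃ d₁₂ : p₁.L ⟶ tp.t₂.D, d₁₂ ≫ tp.t₂.k = tp.t₁.m

/-- Delete-use conflict: no commuting morphism `d₂₁ : L₂ ⟶ D₁` exists. -/
def TrafoPair.DeleteUse {p₁ p₂ : PlainRule C} (tp : TrafoPair p₁ p₂) : Prop :=
  ¬ ∃ d₂₁ : p₂.L ⟶ tp.t₁.D, d₂₁ ≫ tp.t₁.k = tp.t₂.m

/-- A transformation pair is in conflict (parallel dependent) if it is not
parallel independent. -/
def TrafoPair.InConflict {p₁ p₂ : PlainRule C} (tp : TrafoPair p₁ p₂) : Prop :=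
  ¬ tp.ParallelIndep

/-- `tpI` is an initial transformation pair for `tp`. -/
def IsInitialTrafoPairFor {p₁ p₂ : PlainRule C} (tpI tp : TrafoPair p₁ p₂) : Prop :=
  ∃ fI : tpI.G ⟶ tp.G, Nonempty (PairEmbedding tpI tp fI) ∧
    ∀ (tp' : TrafoPair p₁ p₂) (f : tp'.G ⟶ tp.G), PairEmbedding tp' tp f →
      ∃! g : tpI.G ⟶ tp'.G, Nonempty (PairEmbedding tpI tp' g) ∧ g ≫ f = fI

/-- Two transformation pairs are isomorphic if each is embedded into the other via
an isomorphism as extension morphism. -/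
def PairIso {p₁ p₂ : PlainRule C} (tp tp' : TrafoPair p₁ p₂) : Prop :=
  (∃ e : tp.G ⟶ tp'.G, IsIso e ∧ Nonempty (PairEmbedding tp tp' e)) ∧
  (∃ e' : tp'.G ⟶ tp.G, IsIso e' ∧ Nonempty (PairEmbedding tp' tp e'))

section Coproducts

variable [HasBinaryCoproducts C]

lemma isPushout_coprod_left {A B X : C} (g : A ⟶ B) :
    IsPushout g (coprod.inl : A ⟶ A ⨿ X) (coprod.inl : B ⟶ B ⨿ X)
      (coprod.map g (𝟙 X)) := by
  have w : CommSq g (coprod.inl : A ⟶ A ⨿ X) (coprod.inl : B ⟶ B ⨿ X)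
      (coprod.map g (𝟙 X)) := ⟨by simp⟩
  refine IsPushout.of_isColimit' w ?_
  exact PushoutCocone.IsColimit.mk w.w
    (fun s => coprod.desc s.inl (coprod.inr ≫ s.inr))
    (fun s => by simp)
    (fun s => by
      apply coprod.hom_ext
      · simpa using s.condition
      · simp)
    (fun s mm h1 h2 => by
      apply coprod.hom_ext
      · simpa using h1
      · have := coprod.inr ≫= h2
        simpa using this)

lemma isPushout_coprod_right {A B X : C} (g : A ⟶ B) :
    IsPushout g (coprod.inr : A ⟶ X ⨿ A) (coprod.inr : B ⟶ X ⨿ B)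
      (coprod.map (𝟙 X) g) := by
  have w : CommSq g (coprod.inr : A ⟶ X ⨿ A) (coprod.inr : B ⟶ X ⨿ B)
      (coprod.map (𝟙 X) g) := ⟨by simp⟩
  refine IsPushout.of_isColimit' w ?_
  exact PushoutCocone.IsColimit.mk w.w
    (fun s => coprod.desc (coprod.inl ≫ s.inr) s.inl)
    (fun s => by simp)
    (fun s => by
      apply coprod.hom_ext
      · simp
      · simpa using s.condition)
    (fun s mm h1 h2 => by
      apply coprod.hom_ext
      · have := coprod.inl ≫= h2
        simpa using this
      · simpa using h1)

/-- The transformation applying `p` at the coproduct injection `inl : L ⟶ L ⨿ X`. -/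
noncomputable def coprodTrafoL (p : PlainRule C) (X : C) : Trafo p (p.L ⨿ X) (p.R ⨿ X) where
  m := coprod.inl
  D := p.I ⨿ X
  f := coprod.inl
  k := coprod.map p.l (𝟙 X)
  c := coprod.map p.r (𝟙 X)
  cm := coprod.inl
  po1 := isPushout_coprod_left p.l
  po2 := isPushout_coprod_left p.r

/-- The transformation applying `p` at the coproduct injection `inr : L ⟶ X ⨿ L`. -/
noncomputable def coprodTrafoR (p : PlainRule C) (X : C) : Trafo p (X ⨿ p.L) (X ⨿ p.R) where
  m := coprod.inr
  D := X ⨿ p.I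
  f := coprod.inr
  k := coprod.map (𝟙 X) p.l
  c := coprod.map (𝟙 X) p.r
  cm := coprod.inr
  po1 := isPushout_coprod_right p.l
  po2 := isPushout_coprod_right p.r

/-- The transformation pair `tp_(L₁+L₂) : R₁+L₂ ⇐_(p₁,i₁) L₁+L₂ ⇒_(p₂,i₂) L₁+R₂`. -/
noncomputable def coprodPair (p₁ p₂ : PlainRule C) : TrafoPair p₁ p₂ where
  H₁ := p₁.R ⨿ p₂.L
  G := p₁.L ⨿ p₂.L
  H₂ := p₁.L ⨿ p₂.R
  t₁ := coprodTrafoL p₁ p₂.L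
  t₂ := coprodTrafoR p₂ p₁.L

end Coproducts

lemma aux_po_left {C : Type u} [Category.{v} C] [HasBinaryCoproducts C]
    {I L D G X : C} {l : I ⟶ L} {f : I ⟶ D} {m : L ⟶ G} {k : D ⟶ G}
    (po : IsPushout l f m k) (d : X ⟶ D) :
    IsPushout (coprod.map l (𝟙 X)) (coprod.desc f d) (coprod.desc m (d ≫ k)) k := by
  have w : CommSq (coprod.map l (𝟙 X)) (coprod.desc f d) (coprod.desc m (d ≫ k)) k :=
    ⟨by apply coprod.hom_ext <;> simp [po.w]⟩
  refine IsPushout.of_isColimit' w ?_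
  refine PushoutCocone.IsColimit.mk w.w
    (fun s => po.desc (coprod.inl ≫ s.inl) s.inr (by
      have := coprod.inl ≫= s.condition; simpa using this))
    (fun s => ?_) (fun s => ?_) (fun s q h1 h2 => ?_)
  · apply coprod.hom_ext
    · simp
    · have := coprod.inr ≫= s.condition
      rw [coprod.inr_desc_assoc, Category.assoc, po.inr_desc]
      simpa using this.symm
  · exact po.inr_desc _ _ _
  · apply po.hom_ext
    · have := coprod.inl ≫= h1; simpa using this
    · simpa using h2

lemma aux_po_right {C : Type u} [Category.{v} C] [HasBinaryCoproducts C]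
    {I L D G X : C} {l : I ⟶ L} {f : I ⟶ D} {m : L ⟶ G} {k : D ⟶ G}
    (po : IsPushout l f m k) (d : X ⟶ D) :
    IsPushout (coprod.map (𝟙 X) l) (coprod.desc d f) (coprod.desc (d ≫ k) m) k := by
  have w : CommSq (coprod.map (𝟙 X) l) (coprod.desc d f) (coprod.desc (d ≫ k) m) k :=
    ⟨by apply coprod.hom_ext <;> simp [po.w]⟩
  refine IsPushout.of_isColimit' w ?_
  refine PushoutCocone.IsColimit.mk w.w
    (fun s => po.desc (coprod.inr ≫ s.inl) s.inr (by
      have := coprod.inr ≫= s.condition; simpa using this))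
    (fun s => ?_) (fun s => ?_) (fun s q h1 h2 => ?_)
  · apply coprod.hom_ext
    · have := coprod.inl ≫= s.condition
      rw [coprod.inl_desc_assoc, Category.assoc, po.inr_desc]
      simpa using this.symm
    · simp
  · exact po.inr_desc _ _ _
  · apply po.hom_ext
    · have := coprod.inr ≫= h1; simpa using this
    · simpa using h2

/-- Lemma (extensions of the coproduct transformation pair): for a parallel independent
pair `tp` with witnesses `d₁₂`, `d₂₁`, the coproduct mediating morphism
`[m₁, m₂] : L₁+L₂ ⟶ G` embeds `tp_(L₁+L₂)` into `tp` via extension diagrams; concretely,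
the induced vertical morphisms `[f₁, d₂₁]`, `[m₁*, c₁ ∘ d₂₁]`, `[d₁₂, f₂]` and
`[c₂ ∘ d₁₂, m₂*]` make all the required squares pushouts. -/
theorem coprod_mediating_embeds
    {C : Type u} [Category.{v} C] [HasBinaryCoproducts C] {p₁ p₂ : PlainRule C}
    (tp : TrafoPair p₁ p₂)
    (d₁₂ : p₁.L ⟶ tp.t₂.D) (h₁₂ : d₁₂ ≫ tp.t₂.k = tp.t₁.m)
    (d₂₁ : p₂.L ⟶ tp.t₁.D) (h₂₁ : d₂₁ ≫ tp.t₁.k = tp.t₂.m) :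
    (coprod.inl ≫ coprod.desc tp.t₁.m tp.t₂.m = tp.t₁.m) ∧
    (coprod.inr ≫ coprod.desc tp.t₁.m tp.t₂.m = tp.t₂.m) ∧
    (coprod.inl ≫ coprod.desc tp.t₁.f d₂₁ = tp.t₁.f) ∧
    (coprod.inr ≫ coprod.desc d₁₂ tp.t₂.f = tp.t₂.f) ∧
    IsPushout (coprod.map p₁.l (𝟙 p₂.L)) (coprod.desc tp.t₁.f d₂₁)
      (coprod.desc tp.t₁.m tp.t₂.m) tp.t₁.k ∧
    IsPushout (coprod.map p₁.r (𝟙 p₂.L)) (coprod.desc tp.t₁.f d₂₁)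
      (coprod.desc tp.t₁.cm (d₂₁ ≫ tp.t₁.c)) tp.t₁.c ∧
    IsPushout (coprod.map (𝟙 p₁.L) p₂.l) (coprod.desc d₁₂ tp.t₂.f)
      (coprod.desc tp.t₁.m tp.t₂.m) tp.t₂.k ∧
    IsPushout (coprod.map (𝟙 p₁.L) p₂.r) (coprod.desc d₁₂ tp.t₂.f)
      (coprod.desc (d₁₂ ≫ tp.t₂.c) tp.t₂.cm) tp.t₂.c := by
  refine ⟨by simp, by simp, by simp, by simp, ?_, ?_, ?_, ?_⟩
  · rw [← h₂₁]; exact aux_po_left tp.t₁.po1 d₂₁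
  · exact aux_po_left tp.t₁.po2 d₂₁
  · rw [← h₁₂]; exact aux_po_right tp.t₂.po1 d₁₂
  · exact aux_po_right tp.t₂.po2 d₁₂
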